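/- arXiv:2412.07118 — 2 statements merged into one kernel-verified Lean document; each statement's English description precedes it below -/
import Mathlib

section
/- The lowest-degree tensor product space of differential k-forms satisfies Q_1^-Λ^k = span{ x_τ dx^σ : σ a strictly increasing k-index in {1,...,n}, τ a strictly increasing index set with 0 ≤ |τ| ≤ n−k, and τ ⊆ σ^c }, where σ^c is the complement of σ in {1,...,n}. -/
open MvPolynomial Finset MeasureTheory

/-- Strictly increasing `k`-indices in `{1,…,n}`, modelled as `k`-element subsets of `Fin n`. -/
abbrev Idx (n k : ℕ) := {s : Finset (Fin n) // s.card = k}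

/-- A differential `k`-form with polynomial coefficients on `ℝⁿ`:
one polynomial coefficient for each increasing `k`-index. -/
abbrev Form (n k : ℕ) := Idx n k → MvPolynomial (Fin n) ℝ

/-- The sign `(-1)^{#\{j ∈ s : j < i\}}`. -/
noncomputable def sgn {n : ℕ} (s : Finset (Fin n)) (i : Fin n) : ℝ :=
  (-1) ^ (s.filter (· < i)).card

def eraseIdx {n k : ℕ} (s : Idx n (k+1)) {i : Fin n} (hi : i ∈ s.1) : Idx n k :=
  ⟨s.1.erase i, by simp [Finset.card_erase_of_mem hi, s.2]⟩

def insertIdx {n k : ℕ} (s : Idx n k) {i : Fin n} (hi : i ∉ s.1) : Idx n (k+1) :=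
  ⟨insert i s.1, by simp [Finset.card_insert_of_notMem hi, s.2]⟩

/-- The exterior derivative `d^k`. -/
noncomputable def extd (n k : ℕ) : Form n k →ₗ[ℝ] Form n (k+1) where
  toFun ω := fun s => ∑ i ∈ s.1.attach, sgn s.1 i.1 • pderiv i.1 (ω (eraseIdx s i.2))
  map_add' ω η := by
    funext s
    simp [Finset.sum_add_distrib, smul_add]
  map_smul' c ω := by
    funext s
    simp only [Pi.smul_apply, RingHom.id_apply]
    rw [Finset.smul_sum]
    exact Finset.sum_congr rfl (fun i _ => by rw [(pderiv i.1).map_smul, smul_comm])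

/-- The Koszul operator `κ` (contraction with the position vector field). -/
noncomputable def koszul (n k : ℕ) : Form n (k+1) →ₗ[ℝ] Form n k where
  toFun ω := fun s =>
    ∑ i ∈ (s.1ᶜ).attach, sgn s.1 i.1 • (X i.1 * ω (insertIdx s (Finset.mem_compl.mp i.2)))
  map_add' ω η := by
    funext s
    simp [Finset.sum_add_distrib, mul_add, smul_add]
  map_smul' c ω := by
    funext s
    simp only [Pi.smul_apply, RingHom.id_apply, mul_smul_comm]
    rw [Finset.smul_sum]
    exact Finset.sum_congr rfl (fun i _ => (smul_comm _ _ _))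

/-- The codifferential `δ_{k+1}` (the formal adjoint of `d^k` on Euclidean `ℝⁿ`,
which coincides with `(-1)^{(k+1)n} ⋆ d^{n-k-1} ⋆`). -/
noncomputable def codiff (n k : ℕ) : Form n (k+1) →ₗ[ℝ] Form n k where
  toFun ω := fun s =>
    -∑ i ∈ (s.1ᶜ).attach, sgn s.1 i.1 • pderiv i.1 (ω (insertIdx s (Finset.mem_compl.mp i.2)))
  map_add' ω η := by
    funext s
    simp [Finset.sum_add_distrib, smul_add]
    ring
  map_smul' c ω := by
    funext s
    simp only [Pi.smul_apply, RingHom.id_apply, smul_neg, neg_inj]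
    rw [Finset.smul_sum]
    exact Finset.sum_congr rfl (fun i _ => by rw [(pderiv i.1).map_smul, smul_comm])

/-- The operator `κ^δ = ⋆ ∘ κ ∘ ⋆` (exterior multiplication by `Σ xᵢ dxⁱ`, up to sign). -/
noncomputable def kappaDelta (n k : ℕ) : Form n k →ₗ[ℝ] Form n (k+1) where
  toFun ω := fun s => ∑ i ∈ s.1.attach, sgn s.1 i.1 • (X i.1 * ω (eraseIdx s i.2))
  map_add' ω η := by
    funext s
    simp [Finset.sum_add_distrib, mul_add, smul_add]
  map_smul' c ω := by
    funext s
    simp only [Pi.smul_apply, RingHom.id_apply, mul_smul_comm]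
    rw [Finset.smul_sum]
    exact Finset.sum_congr rfl (fun i _ => (smul_comm _ _ _))

/-- Sign of the permutation `(t, tᶜ) ↦ (1,…,n)`, i.e. `⋆ dx^t = starSign t · dx^{tᶜ}`. -/
noncomputable def starSign {n : ℕ} (t : Finset (Fin n)) : ℝ :=
  (-1) ^ (∑ i ∈ t, ((tᶜ).filter (· < i)).card)

/-- The Hodge star operator on `k`-forms on `ℝⁿ`, `k + l = n`. -/
noncomputable def hodge (n k l : ℕ) (h : k + l = n) : Form n k →ₗ[ℝ] Form n l where
  toFun ω := fun s => starSign (s.1ᶜ) •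
    ω ⟨s.1ᶜ, by rw [Finset.card_compl, s.2, Fintype.card_fin]; omega⟩
  map_add' ω η := by funext s; simp [smul_add]
  map_smul' c ω := by funext s; simp only [Pi.smul_apply, RingHom.id_apply]; rw [smul_comm]

/-- The monomial form `x_τ dx^σ`. -/
noncomputable def monForm (n k : ℕ) (τ : Finset (Fin n)) (σ : Idx n k) : Form n k :=
  fun s => if s = σ then ∏ i ∈ τ, X i else 0

/-- `Q_1^-Λ^k = span{ x_τ dx^σ : |σ| = k, 0 ≤ |τ| ≤ n-k, τ ⊆ σᶜ }`. -/
noncomputable def Qm (n k : ℕ) : Submodule ℝ (Form n k) :=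
  Submodule.span ℝ
    {ω | ∃ (τ : Finset (Fin n)) (σ : Idx n k), τ.card ≤ n - k ∧ τ ⊆ (σ.1)ᶜ ∧ ω = monForm n k τ σ}

/-- `Q_1^{*,-}Λ^k = span{ x_τ' dx^σ' : |σ'| = k, 0 ≤ |τ'| ≤ k, τ' ⊆ σ' }`. -/
noncomputable def Qs (n k : ℕ) : Submodule ℝ (Form n k) :=
  Submodule.span ℝ
    {ω | ∃ (τ : Finset (Fin n)) (σ : Idx n k), τ.card ≤ k ∧ τ ⊆ σ.1 ∧ ω = monForm n k τ σ}

/-- `P_0Λ^k`: forms with constant coefficients. -/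
noncomputable def P0 (n k : ℕ) : Submodule ℝ (Form n k) :=
  Submodule.span ℝ {ω | ∃ σ : Idx n k, ω = monForm n k ∅ σ}

/-- The Whitney space `P_1^-Λ^k = P_0Λ^k + κ(P_0Λ^{k+1})`. -/
noncomputable def Pm (n k : ℕ) : Submodule ℝ (Form n k) :=
  P0 n k ⊔ Submodule.map (koszul n k) (P0 n (k+1))

/-- The star Whitney space `P_1^{*,-}Λ^{k+1} = P_0Λ^{k+1} + κ^δ(P_0Λ^k)`. -/
noncomputable def PsS (n k : ℕ) : Submodule ℝ (Form n (k+1)) :=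
  P0 n (k+1) ⊔ Submodule.map (kappaDelta n k) (P0 n k)

/-- `L²` inner product of `k`-forms on the centered box `[-r, r]`. -/
noncomputable def binner (n k : ℕ) (r : Fin n → ℝ) (ω η : Form n k) : ℝ :=
  ∑ s : Idx n k, ∫ x in Set.Icc (fun i => -(r i)) r, eval x (ω s * η s)

/-- `L²` inner product of `k`-forms on the reference cube `T = [-1,1]ⁿ`. -/
noncomputable def finner (n k : ℕ) (ω η : Form n k) : ℝ :=
  binner n k (fun _ => (1 : ℝ)) ω η

/-- The lowest-degree tensor product space
`Q_1^-Λ^k = ⊕_{α ∈ IX_{k,n}} [⊗_{i=1}^n P_{1-δ_{i,α}}([-1,1])] dx^α`: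
the coefficient of `dx^σ` has degree at most `1 - δ_{i,σ}` in each variable `x_i`. -/
noncomputable def Qtensor (n k : ℕ) : Submodule ℝ (Form n k) where
  carrier := {ω | ∀ σ : Idx n k, ∀ m ∈ (ω σ).support, ∀ i : Fin n,
    m i ≤ if i ∈ σ.1 then 0 else 1}
  add_mem' := by
    intro a b ha hb σ m hm i
    rcases Finset.mem_union.mp (MvPolynomial.support_add hm) with h | h
    · exact ha σ m h i
    · exact hb σ m h i
  zero_mem' := by intro σ m hm i; simp at hm
  smul_mem' := by
    intro c a ha σ m hm i
    exact ha σ m (MvPolynomial.support_smul hm) i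

lemma prodX_eq_monomial {n : ℕ} (τ : Finset (Fin n)) :
    (∏ i ∈ τ, X i : MvPolynomial (Fin n) ℝ)
      = monomial (∑ i ∈ τ, Finsupp.single i 1) 1 := by
  induction τ using Finset.induction with
  | empty => simp
  | insert _ _ h ih =>
    rw [Finset.prod_insert h, Finset.sum_insert h, ih, X, monomial_mul, one_mul]

lemma monomial_eq_smul_prod {n : ℕ} (m : Fin n →₀ ℕ)
    (h : ∀ i ∈ m.support, m i = 1) (c : ℝ) :
    (monomial m c : MvPolynomial (Fin n) ℝ) = c • ∏ i ∈ m.support, X i := by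
  rw [MvPolynomial.monomial_eq, MvPolynomial.smul_eq_C_mul]
  congr 1
  rw [Finsupp.prod]
  exact Finset.prod_congr rfl fun i hi => by rw [h i hi, pow_one]

/-- Lemma 3.1. `Q_1^-Λ^k` (tensor product definition) equals
`span{ x_τ dx^σ : σ ∈ IX_{k,n}, 0 ≤ |τ| ≤ n-k, τ ⊆ σᶜ }`. -/
theorem stmt0 (n k : ℕ) (hk : k ≤ n) : Qtensor n k = Qm n k := by
  apply le_antisymm
  · -- Qtensor ≤ Qm
    intro ω hω
    have hm1 : ∀ (s : Idx n k), ∀ m ∈ (ω s).support, ∀ i ∈ m.support, m i = 1 := by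
      intro s m hm i hi
      have h1 : m i ≠ 0 := Finsupp.mem_support_iff.mp hi
      have h2 := hω s m hm i
      by_cases hs : i ∈ s.1
      · simp [hs] at h2; omega
      · simp [hs] at h2; omega
    have key : ω = ∑ σ : Idx n k, ∑ m ∈ (ω σ).support,
        (ω σ).coeff m • monForm n k m.support σ := by
      funext s
      rw [Finset.sum_apply]
      rw [Finset.sum_eq_single s]
      · rw [Finset.sum_apply]
        have : ∀ m ∈ (ω s).support,
            ((ω s).coeff m • monForm n k m.support s) s = monomial m ((ω s).coeff m) := by
          intro m hm
          simp only [Pi.smul_apply, monForm, if_pos rfl, if_true]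
          rw [monomial_eq_smul_prod m (hm1 s m hm)]
        rw [Finset.sum_congr rfl this, MvPolynomial.support_sum_monomial_coeff]
      · intro σ _ hσ
        rw [Finset.sum_apply]
        apply Finset.sum_eq_zero
        intro m _
        simp [monForm, (Ne.symm hσ : s ≠ σ)]
      · intro h; exact absurd (Finset.mem_univ s) h
    rw [key]
    apply Submodule.sum_mem
    intro σ _
    apply Submodule.sum_mem
    intro m hm
    apply Submodule.smul_mem
    apply Submodule.subset_span
    refine ⟨m.support, σ, ?_, ?_, rfl⟩
    · have hsub : m.support ⊆ (σ.1)ᶜ := by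
        intro i hi
        rw [Finset.mem_compl]
        intro hiσ
        have h2 := hω σ m hm i
        rw [if_pos hiσ] at h2
        exact Finsupp.mem_support_iff.mp hi (Nat.le_zero.mp h2)
      calc m.support.card ≤ (σ.1)ᶜ.card := Finset.card_le_card hsub
        _ = n - k := by rw [Finset.card_compl, σ.2, Fintype.card_fin]
    · intro i hi
      rw [Finset.mem_compl]
      intro hiσ
      have h2 := hω σ m hm i
      rw [if_pos hiσ] at h2
      exact Finsupp.mem_support_iff.mp hi (Nat.le_zero.mp h2)
  · -- Qm ≤ Qtensor
    rw [Qm, Submodule.span_le]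
    rintro ω ⟨τ, σ, hcard, hsub, rfl⟩
    intro s m hm i
    by_cases hs : s = σ
    · subst hs
      simp only [monForm, if_pos rfl, if_true, prodX_eq_monomial] at hm
      rw [MvPolynomial.support_monomial] at hm
      simp only [one_ne_zero, if_false, Finset.mem_singleton] at hm
      subst hm
      have hval : (∑ j ∈ τ, Finsupp.single j 1) i = if i ∈ τ then 1 else 0 := by
        rw [Finset.sum_apply']
        simp [Finsupp.single_apply]
      rw [hval]
      by_cases hiσ : i ∈ s.1
      · rw [if_pos hiσ, if_neg (fun hiτ => (Finset.mem_compl.mp (hsub hiτ)) hiσ)]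
      · rw [if_neg hiσ]
        split <;> omega
    · simp [monForm, hs] at hm
end

section
/- If ω is a polynomial k-form with homogeneous coefficients of degree j lying in Q_1^-Λ^k and d^k ω = 0, then the Koszul image κω lies in Q_1^-Λ^{k-1} and d^{k-1}(κω) = (k+j)·ω; in particular ω lies in the range of d^{k-1} on Q_1^-Λ^{k-1}. -/
open MvPolynomial Finset MeasureTheory

section Aux

open Finset MvPolynomial

/-- Total version of a form, defined on all finsets. -/
noncomputable def tot {n k : ℕ} (ω : Form n k) (t : Finset (Fin n)) : MvPolynomial (Fin n) ℝ :=
  if h : t.card = k then ω ⟨t, h⟩ else 0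

lemma tot_val {n k : ℕ} (ω : Form n k) (s : Idx n k) : tot ω s.1 = ω s := by
  rw [tot, dif_pos s.2]

lemma extd_apply' {n k : ℕ} (ω : Form n k) (s : Idx n (k+1)) :
    extd n k ω s = ∑ i ∈ s.1, sgn s.1 i • pderiv i (tot ω (s.1.erase i)) := by
  show ∑ i ∈ s.1.attach, sgn s.1 i.1 • pderiv i.1 (ω (eraseIdx s i.2)) = _
  rw [← Finset.sum_attach s.1 (fun i => sgn s.1 i • pderiv i (tot ω (s.1.erase i)))]
  refine Finset.sum_congr rfl fun i _ => ?_
  have hc : (s.1.erase i.1).card = k := by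
    rw [Finset.card_erase_of_mem i.2, s.2]; omega
  rw [tot, dif_pos hc]
  rfl

lemma koszul_apply' {n k : ℕ} (ω : Form n (k+1)) (s : Idx n k) :
    koszul n k ω s = ∑ i ∈ s.1ᶜ, sgn s.1 i • (X i * tot ω (insert i s.1)) := by
  show ∑ i ∈ s.1ᶜ.attach, sgn s.1 i.1 • (X i.1 * ω (insertIdx s (Finset.mem_compl.mp i.2))) = _
  rw [← Finset.sum_attach s.1ᶜ (fun i => sgn s.1 i • (X i * tot ω (insert i s.1)))]
  refine Finset.sum_congr rfl fun i _ => ?_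
  have hc : (insert i.1 s.1).card = k + 1 := by
    rw [Finset.card_insert_of_notMem (Finset.mem_compl.mp i.2), s.2]
  rw [tot, dif_pos hc]
  rfl

lemma sgn_sq {n : ℕ} (s : Finset (Fin n)) (i : Fin n) : sgn s i * sgn s i = 1 := by
  rw [sgn, ← pow_add]
  exact Even.neg_one_pow ⟨_, rfl⟩

lemma sgn_erase_self {n : ℕ} (s : Finset (Fin n)) (i : Fin n) : sgn (s.erase i) i = sgn s i := by
  unfold sgn
  rw [Finset.filter_erase, Finset.erase_eq_of_notMem (by simp)]

lemma sgn_insert_self {n : ℕ} (s : Finset (Fin n)) (m : Fin n) :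
    sgn (insert m s) m = sgn s m := by
  unfold sgn
  rw [Finset.filter_insert, if_neg (lt_irrefl m)]

lemma sgn_insert {n : ℕ} {s : Finset (Fin n)} {m i : Fin n} (hm : m ∉ s) :
    sgn (insert m s) i = if m < i then -sgn s i else sgn s i := by
  unfold sgn
  rw [Finset.filter_insert]
  split
  · rw [Finset.card_insert_of_notMem (fun h => hm (Finset.mem_filter.mp h).1), pow_succ]
    ring
  · rfl

lemma sgn_erase {n : ℕ} {s : Finset (Fin n)} {i m : Fin n} (hi : i ∈ s) :
    sgn (s.erase i) m = if i < m then -sgn s m else sgn s m := by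
  have h2 := sgn_insert (s := s.erase i) (m := i) (i := m) (Finset.notMem_erase i s)
  rw [Finset.insert_erase hi] at h2
  rw [h2]
  split <;> ring

lemma sgn_cancel {n : ℕ} {s : Finset (Fin n)} {i m : Fin n} (hi : i ∈ s) (hm : m ∉ s) :
    sgn s i * sgn (s.erase i) m = -(sgn s m * sgn (insert m s) i) := by
  have hne : i ≠ m := fun h => hm (h ▸ hi)
  rw [sgn_erase hi, sgn_insert hm]
  rcases lt_or_gt_of_ne hne with h | h
  · rw [if_pos h, if_neg (asymm h)]; ring
  · rw [if_neg (asymm h), if_pos h]; ring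

lemma X_mul_pderiv_monomial {n : ℕ} (i : Fin n) (d : Fin n →₀ ℕ) (a : ℝ) :
    X i * pderiv i (monomial d a) = monomial d (a * d i) := by
  rw [pderiv_monomial, X, monomial_mul, one_mul]
  by_cases h : d i = 0
  · simp [h]
  · congr 1
    rw [add_comm, tsub_add_cancel_of_le (Finsupp.single_le_iff.mpr (Nat.one_le_iff_ne_zero.mpr h))]

lemma euler {n j : ℕ} {p : MvPolynomial (Fin n) ℝ} (hp : p.IsHomogeneous j) :
    ∑ i : Fin n, X i * pderiv i p = j • p := by
  have key : ∀ d ∈ p.support, ∑ i : Fin n, X i * pderiv i (monomial d (coeff d p))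
      = j • monomial d (coeff d p) := by
    intro d hd
    have hw : (Finsupp.weight 1 d : ℕ) = j := hp (MvPolynomial.mem_support_iff.mp hd)
    have hdeg : ∑ i : Fin n, d i = j := by
      rw [Finsupp.weight_apply, Finsupp.sum_fintype] at hw
      · simpa using hw
      · intro _; rfl
    calc ∑ i : Fin n, X i * pderiv i (monomial d (coeff d p))
        = ∑ i : Fin n, monomial d (coeff d p * d i) :=
          Finset.sum_congr rfl fun i _ => X_mul_pderiv_monomial i d _
      _ = monomial d (coeff d p * ∑ i : Fin n, (d i : ℝ)) := by
          rw [Finset.mul_sum, map_sum]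
      _ = j • monomial d (coeff d p) := by
          rw [← Nat.cast_sum, hdeg, ← map_nsmul]
          congr 1
          rw [nsmul_eq_mul, mul_comm]
  calc ∑ i : Fin n, X i * pderiv i p
      = ∑ i : Fin n, X i * pderiv i (∑ d ∈ p.support, monomial d (coeff d p)) := by
        rw [← p.as_sum]
    _ = ∑ i : Fin n, ∑ d ∈ p.support, X i * pderiv i (monomial d (coeff d p)) := by
        refine Finset.sum_congr rfl fun i _ => ?_
        rw [map_sum, Finset.mul_sum]
    _ = ∑ d ∈ p.support, ∑ i : Fin n, X i * pderiv i (monomial d (coeff d p)) :=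
        Finset.sum_comm
    _ = ∑ d ∈ p.support, j • monomial d (coeff d p) := Finset.sum_congr rfl key
    _ = j • p := by rw [← Finset.smul_sum, ← p.as_sum]

lemma compl_erase' {n : ℕ} {s : Finset (Fin n)} {i : Fin n} :
    (s.erase i)ᶜ = insert i sᶜ := by
  ext x
  simp only [Finset.mem_compl, Finset.mem_erase, Finset.mem_insert]
  tauto

end Aux

section Cartan

open Finset MvPolynomial

lemma cartan {n k j : ℕ} (ω : Form n (k+1)) (hhom : ∀ s : Idx n (k+1), (ω s).IsHomogeneous j) :
    extd n k (koszul n k ω) + koszul n (k+1) (extd n (k+1) ω) = ((k + 1 + j : ℕ) : ℝ) • ω := by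
  funext s
  simp only [Pi.add_apply, Pi.smul_apply]
  have hA : extd n k (koszul n k ω) s
      = ∑ i ∈ s.1, ∑ m ∈ (s.1.erase i)ᶜ,
          (sgn s.1 i * sgn (s.1.erase i) m) • pderiv i (X m * tot ω (insert m (s.1.erase i))) := by
    rw [extd_apply']
    refine Finset.sum_congr rfl fun i hi => ?_
    have hc : (s.1.erase i).card = k := by rw [Finset.card_erase_of_mem hi, s.2]; omega
    rw [tot, dif_pos hc, koszul_apply', map_sum, Finset.smul_sum]
    refine Finset.sum_congr rfl fun m _ => ?_
    rw [Derivation.map_smul, smul_smul]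
  have hB : koszul n (k+1) (extd n (k+1) ω) s
      = ∑ m ∈ s.1ᶜ, ∑ i ∈ insert m s.1,
          (sgn s.1 m * sgn (insert m s.1) i) • (X m * pderiv i (tot ω ((insert m s.1).erase i))) := by
    rw [koszul_apply']
    refine Finset.sum_congr rfl fun m hm => ?_
    have hm' : m ∉ s.1 := Finset.mem_compl.mp hm
    have hc : (insert m s.1).card = k + 1 + 1 := by rw [Finset.card_insert_of_notMem hm', s.2]
    rw [tot, dif_pos hc, extd_apply', Finset.mul_sum, Finset.smul_sum]
    refine Finset.sum_congr rfl fun i _ => ?_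
    rw [mul_smul_comm, smul_smul]
  -- split A
  have hAsplit : extd n k (koszul n k ω) s
      = (∑ i ∈ s.1, (ω s + X i * pderiv i (ω s)))
        + ∑ i ∈ s.1, ∑ m ∈ s.1ᶜ,
            (sgn s.1 i * sgn (s.1.erase i) m) • pderiv i (X m * tot ω (insert m (s.1.erase i))) := by
    rw [hA, ← Finset.sum_add_distrib]
    refine Finset.sum_congr rfl fun i hi => ?_
    rw [compl_erase', Finset.sum_insert (by simp [hi])]
    congr 1
    rw [sgn_erase_self, sgn_sq, one_smul, Finset.insert_erase hi, tot_val, pderiv_mul,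
      pderiv_X_self, one_mul]
  -- split B
  have hBsplit : koszul n (k+1) (extd n (k+1) ω) s
      = (∑ m ∈ s.1ᶜ, X m * pderiv m (ω s))
        + ∑ m ∈ s.1ᶜ, ∑ i ∈ s.1,
            (sgn s.1 m * sgn (insert m s.1) i) • (X m * pderiv i (tot ω ((insert m s.1).erase i))) := by
    rw [hB, ← Finset.sum_add_distrib]
    refine Finset.sum_congr rfl fun m hm => ?_
    have hm' : m ∉ s.1 := Finset.mem_compl.mp hm
    rw [Finset.sum_insert hm']
    congr 1
    rw [sgn_insert_self, sgn_sq, one_smul, Finset.erase_insert hm', tot_val]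
  -- off-diagonal cancellation
  have hoff : (∑ i ∈ s.1, ∑ m ∈ s.1ᶜ,
        (sgn s.1 i * sgn (s.1.erase i) m) • pderiv i (X m * tot ω (insert m (s.1.erase i))))
      + (∑ m ∈ s.1ᶜ, ∑ i ∈ s.1,
        (sgn s.1 m * sgn (insert m s.1) i) • (X m * pderiv i (tot ω ((insert m s.1).erase i)))) = 0 := by
    rw [Finset.sum_comm (s := s.1ᶜ), ← Finset.sum_add_distrib]
    refine Finset.sum_eq_zero fun i hi => ?_
    rw [← Finset.sum_add_distrib]
    refine Finset.sum_eq_zero fun m hm => ?_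
    have hm' : m ∉ s.1 := Finset.mem_compl.mp hm
    have hne : m ≠ i := fun h => hm' (h ▸ hi)
    rw [pderiv_mul, pderiv_X_of_ne hne, zero_mul, zero_add,
      ← Finset.erase_insert_of_ne hne, sgn_cancel hi hm', neg_smul,
      neg_add_cancel]
  rw [hAsplit, hBsplit]
  have hdiag : (∑ i ∈ s.1, (ω s + X i * pderiv i (ω s))) + (∑ m ∈ s.1ᶜ, X m * pderiv m (ω s))
      = ((k + 1 + j : ℕ) : ℝ) • ω s := by
    rw [Finset.sum_add_distrib, Finset.sum_const, s.2, add_assoc,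
      Finset.sum_add_sum_compl, euler (hhom s)]
    rw [← Nat.cast_smul_eq_nsmul ℝ, ← Nat.cast_smul_eq_nsmul ℝ, ← add_smul, ← Nat.cast_add]
  calc _ = ((∑ i ∈ s.1, (ω s + X i * pderiv i (ω s))) + (∑ m ∈ s.1ᶜ, X m * pderiv m (ω s)))
        + ((∑ i ∈ s.1, ∑ m ∈ s.1ᶜ,
            (sgn s.1 i * sgn (s.1.erase i) m) • pderiv i (X m * tot ω (insert m (s.1.erase i))))
          + (∑ m ∈ s.1ᶜ, ∑ i ∈ s.1,
            (sgn s.1 m * sgn (insert m s.1) i) • (X m * pderiv i (tot ω ((insert m s.1).erase i))))) := by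
        ring
    _ = ((k + 1 + j : ℕ) : ℝ) • ω s := by rw [hoff, hdiag, add_zero]

end Cartan

section QmPart

open Finset MvPolynomial

lemma koszul_monForm {n k : ℕ} (τ : Finset (Fin n)) (σ : Idx n (k+1)) (hτ : τ ⊆ (σ.1)ᶜ) :
    koszul n k (monForm n (k+1) τ σ)
      = ∑ i ∈ σ.1.attach, sgn (σ.1.erase i.1) i.1 •
          monForm n k (insert i.1 τ) (eraseIdx σ i.2) := by
  funext s
  have L : koszul n k (monForm n (k+1) τ σ) s
      = ∑ m ∈ s.1ᶜ.filter (fun m => insert m s.1 = σ.1), sgn s.1 m • (X m * ∏ x ∈ τ, X x) := by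
    rw [koszul_apply', Finset.sum_filter]
    refine Finset.sum_congr rfl fun m hm => ?_
    have hm' : m ∉ s.1 := Finset.mem_compl.mp hm
    rw [tot, dif_pos (by rw [Finset.card_insert_of_notMem hm', s.2])]
    unfold monForm
    by_cases h : insert m s.1 = σ.1
    · rw [if_pos (Subtype.ext h), if_pos h]
    · rw [if_neg (fun hc => h (congrArg Subtype.val hc)), if_neg h, mul_zero, smul_zero]
  have R : (∑ i ∈ σ.1.attach, sgn (σ.1.erase i.1) i.1 •
        monForm n k (insert i.1 τ) (eraseIdx σ i.2)) s
      = ∑ m ∈ σ.1.filter (fun m => s.1 = σ.1.erase m),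
          sgn (σ.1.erase m) m • (X m * ∏ x ∈ τ, X x) := by
    rw [Finset.sum_apply, Finset.sum_filter, ← Finset.sum_attach σ.1
      (fun m => if s.1 = σ.1.erase m then sgn (σ.1.erase m) m • (X m * ∏ x ∈ τ, X x) else 0)]
    refine Finset.sum_congr rfl fun i _ => ?_
    have hiτ : i.1 ∉ τ := fun h => (Finset.mem_compl.mp (hτ h)) i.2
    simp only [Pi.smul_apply]
    unfold monForm
    by_cases h : s.1 = σ.1.erase i.1
    · rw [if_pos (Subtype.ext h), if_pos h, Finset.prod_insert hiτ]
    · rw [if_neg (fun hc => h (congrArg Subtype.val hc)), if_neg h, smul_zero]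
  have hsets : s.1ᶜ.filter (fun m => insert m s.1 = σ.1)
      = σ.1.filter (fun m => s.1 = σ.1.erase m) := by
    ext m
    simp only [Finset.mem_filter, Finset.mem_compl]
    constructor
    · rintro ⟨hm, h⟩
      exact ⟨h ▸ Finset.mem_insert_self m s.1, by rw [← h, Finset.erase_insert hm]⟩
    · rintro ⟨hm, h⟩
      have hms : m ∉ s.1 := h ▸ Finset.notMem_erase m σ.1
      exact ⟨hms, by rw [h, Finset.insert_erase hm]⟩
  rw [L, R, hsets]
  refine Finset.sum_congr rfl fun m hm => ?_
  obtain ⟨hmσ, h⟩ := Finset.mem_filter.mp hm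
  rw [h]

lemma koszul_mem_Qm {n k : ℕ} {ω : Form n (k+1)} (hω : ω ∈ Qm n (k+1)) :
    koszul n k ω ∈ Qm n k := by
  induction hω using Submodule.span_induction with
  | mem x hx =>
    obtain ⟨τ, σ, hcard, hτ, rfl⟩ := hx
    rw [koszul_monForm τ σ hτ]
    refine Submodule.sum_mem _ fun i _ => Submodule.smul_mem _ _ (Submodule.subset_span ?_)
    refine ⟨insert i.1 τ, eraseIdx σ i.2, ?_, ?_, rfl⟩
    · have hiτ : i.1 ∉ τ := fun h => (Finset.mem_compl.mp (hτ h)) i.2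
      rw [Finset.card_insert_of_notMem hiτ]
      have hn : k + 1 ≤ n := by
        have := Finset.card_le_univ σ.1
        rwa [σ.2, Fintype.card_fin] at this
      omega
    · show insert i.1 τ ⊆ (σ.1.erase i.1)ᶜ
      rw [compl_erase']
      exact Finset.insert_subset_insert i.1 hτ
  | zero => rw [map_zero]; exact Submodule.zero_mem _
  | add x y _ _ hx hy => rw [map_add]; exact Submodule.add_mem _ hx hy
  | smul c x _ hx => rw [LinearMap.map_smul]; exact Submodule.smul_mem _ _ hx

end QmPart

/-- If `ω` is a `(k+1)`-form in `Q_1^-Λ^{k+1}` with homogeneous coefficients of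
degree `j` and `dω = 0`, then `κω ∈ Q_1^-Λ^k`, `d(κω) = ((k+1)+j)·ω`, and in particular
`ω ∈ R(d^k, Q_1^-Λ^k)`. -/
theorem stmt3 (n k j : ℕ) (ω : Form n (k+1)) (hω : ω ∈ Qm n (k+1))
    (hhom : ∀ s : Idx n (k+1), (ω s).IsHomogeneous j)
    (hd : extd n (k+1) ω = 0) :
    koszul n k ω ∈ Qm n k ∧
      extd n k (koszul n k ω) = (((k + 1 + j : ℕ) : ℝ)) • ω ∧
      ω ∈ Submodule.map (extd n k) (Qm n k) := by
  have h1 : koszul n k ω ∈ Qm n k := koszul_mem_Qm hω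
  have h2 : extd n k (koszul n k ω) = ((k + 1 + j : ℕ) : ℝ) • ω := by
    have hc := cartan ω hhom
    rwa [hd, map_zero, add_zero] at hc
  refine ⟨h1, h2, ?_⟩
  have hcne : ((k + 1 + j : ℕ) : ℝ) ≠ 0 := Nat.cast_ne_zero.mpr (by omega)
  refine ⟨(((k + 1 + j : ℕ) : ℝ))⁻¹ • koszul n k ω, Submodule.smul_mem _ _ h1, ?_⟩
  rw [LinearMap.map_smul, h2, smul_smul, inv_mul_cancel₀ hcne, one_smul]
end
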